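/- arXiv:2108.12580 — 5 statements merged into one kernel-verified Lean document; each statement's English description precedes it below -/
import Mathlib

section
/- Let V be a real inner product space, V₁, V₂ subspaces with |(v₁, v₂)| ≤ γ‖v₁‖‖v₂‖ for all v₁ ∈ V₁, v₂ ∈ V₂ and some γ ∈ [0, 1). Then for any a₁, b₁ ∈ V₁ and a₂, b₂ ∈ V₂, (1/Δt)(‖b₁‖² + ‖b₂‖²) + (1/Δt)((a₂, b₁) + (a₁, b₂)) ≥ ((2 − γ)/(2Δt))(‖b₁‖² + ‖b₂‖²) − (γ/(2Δt))(‖a₁‖² + ‖a₂‖²), for any Δt > 0. -/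
open scoped RealInnerProductSpace

theorem stmt_2 {V : Type*} [NormedAddCommGroup V] [InnerProductSpace ℝ V]
    (V₁ V₂ : Submodule ℝ V) (γ : ℝ) (hγ0 : 0 ≤ γ) (hγ1 : γ < 1)
    (hcorr : ∀ v₁ ∈ V₁, ∀ v₂ ∈ V₂, |⟪v₁, v₂⟫| ≤ γ * ‖v₁‖ * ‖v₂‖)
    (Δt : ℝ) (hΔt : 0 < Δt)
    (a₁ b₁ : V) (ha₁ : a₁ ∈ V₁) (hb₁ : b₁ ∈ V₁)
    (a₂ b₂ : V) (ha₂ : a₂ ∈ V₂) (hb₂ : b₂ ∈ V₂) :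
    (1 / Δt) * (‖b₁‖ ^ 2 + ‖b₂‖ ^ 2) + (1 / Δt) * (⟪a₂, b₁⟫ + ⟪a₁, b₂⟫) ≥
      ((2 - γ) / (2 * Δt)) * (‖b₁‖ ^ 2 + ‖b₂‖ ^ 2)
        - (γ / (2 * Δt)) * (‖a₁‖ ^ 2 + ‖a₂‖ ^ 2) := by
  have h1 := hcorr b₁ hb₁ a₂ ha₂
  have h2 := hcorr a₁ ha₁ b₂ hb₂
  rw [real_inner_comm a₂ b₁] at h1
  have h1' : ⟪a₂, b₁⟫ ≥ -(γ * ‖b₁‖ * ‖a₂‖) := by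
    have := abs_le.mp h1; linarith [this.1]
  have h2' : ⟪a₁, b₂⟫ ≥ -(γ * ‖a₁‖ * ‖b₂‖) := by
    have := abs_le.mp h2; linarith [this.1]
  have hΔ : 0 < 1 / Δt := by positivity
  rw [ge_iff_le, div_mul_eq_mul_div, div_mul_eq_mul_div, ← sub_div,
    div_le_iff₀ (by positivity), add_mul]
  have e1 : (1 / Δt) * (‖b₁‖ ^ 2 + ‖b₂‖ ^ 2) * (2 * Δt) = 2 * (‖b₁‖ ^ 2 + ‖b₂‖ ^ 2) := by
    field_simp
  have e2 : (1 / Δt) * (⟪a₂, b₁⟫ + ⟪a₁, b₂⟫) * (2 * Δt) = 2 * (⟪a₂, b₁⟫ + ⟪a₁, b₂⟫) := by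
    field_simp
  rw [e1, e2]
  nlinarith [sq_nonneg (‖b₁‖ - ‖a₂‖), sq_nonneg (‖a₁‖ - ‖b₂‖),
    mul_nonneg hγ0 (sq_nonneg (‖b₁‖ - ‖a₂‖)), mul_nonneg hγ0 (sq_nonneg (‖a₁‖ - ‖b₂‖))]
end

section
/- Let F, G : ℝᵈ → ℝ be C², with ∇²F(x) positive semidefinite for all x and vᵀ(∇²G(x))v ≥ −b̲‖v‖² for all x, v, where b̲ ≥ 0. Suppose (uⁿ) satisfies the implicit Euler scheme (uⁿ⁺¹ − uⁿ)/Δt + ∇F(uⁿ⁺¹) + ∇G(uⁿ⁺¹) = 0 with Δt > 0 and Δt·b̲ ≤ 1. Then F(uⁿ⁺¹) + G(uⁿ⁺¹) ≤ F(uⁿ) + G(uⁿ) for all n. -/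
open scoped RealInnerProductSpace

private lemma taylor_lb {d : ℕ} (f : EuclideanSpace ℝ (Fin d) → ℝ)
    (hf : ContDiff ℝ 2 f) (m : ℝ)
    (hm : ∀ x v : EuclideanSpace ℝ (Fin d), m * ‖v‖ ^ 2 ≤ iteratedFDeriv ℝ 2 f x ![v, v])
    (x y : EuclideanSpace ℝ (Fin d)) :
    f x + fderiv ℝ f x (y - x) + m / 2 * ‖y - x‖ ^ 2 ≤ f y := by
  set v : EuclideanSpace ℝ (Fin d) := y - x with hv
  set L : ℝ → EuclideanSpace ℝ (Fin d) := fun t => x + t • v with hL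
  have hfd : Differentiable ℝ f := hf.differentiable (by norm_num)
  have hdf : ContDiff ℝ 1 (fderiv ℝ f) := hf.fderiv_right (by norm_num)
  have hLd : ∀ t : ℝ, HasDerivAt L v t := by
    intro t
    have := ((hasDerivAt_id t).smul_const v).const_add x
    rw [one_smul] at this
    exact this
  -- g t = f (L t)
  set g : ℝ → ℝ := fun t => f (L t) with hg
  set g1 : ℝ → ℝ := fun t => fderiv ℝ f (L t) v with hg1
  have hgd : ∀ t : ℝ, HasDerivAt g (g1 t) t := fun t =>
    ((hfd (L t)).hasFDerivAt.comp_hasDerivAt t (hLd t))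
  have hg1d : ∀ t : ℝ, HasDerivAt g1 (iteratedFDeriv ℝ 2 f (L t) ![v, v]) t := by
    intro t
    have h1 : HasFDerivAt (fderiv ℝ f) (fderiv ℝ (fderiv ℝ f) (L t)) (L t) :=
      (hdf.differentiable one_ne_zero (L t)).hasFDerivAt
    have h2 : HasDerivAt (fun s => fderiv ℝ f (L s)) (fderiv ℝ (fderiv ℝ f) (L t) v) t :=
      h1.comp_hasDerivAt t (hLd t)
    have h3 : HasDerivAt (fun s => (ContinuousLinearMap.apply ℝ ℝ v) (fderiv ℝ f (L s)))
        ((ContinuousLinearMap.apply ℝ ℝ v) (fderiv ℝ (fderiv ℝ f) (L t) v)) t :=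
      (ContinuousLinearMap.apply ℝ ℝ v).hasFDerivAt.comp_hasDerivAt t h2
    have : iteratedFDeriv ℝ 2 f (L t) ![v, v] = fderiv ℝ (fderiv ℝ f) (L t) v v := by
      rw [iteratedFDeriv_two_apply]
      simp
    rw [this]
    exact h3
  -- h t = g t - g 0 - t * g1 0 - m/2 * t^2 * ‖v‖^2
  set h1 : ℝ → ℝ := fun t => g1 t - g1 0 - m * t * ‖v‖ ^ 2 with hh1
  set h : ℝ → ℝ := fun t => g t - g 0 - t * g1 0 - m / 2 * t ^ 2 * ‖v‖ ^ 2 with hh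
  have hhd : ∀ t : ℝ, HasDerivAt h (h1 t) t := by
    intro t
    have h0 := (((hgd t).sub ((hasDerivAt_const t (g 0)))).sub
        ((hasDerivAt_id t).mul_const (g1 0))).sub
        (((hasDerivAt_pow 2 t).const_mul (m / 2)).mul_const (‖v‖ ^ 2))
    refine HasDerivAt.congr_deriv h0 ?_
    simp only [hh1, Nat.cast_ofNat, pow_one]
    ring
  have hh1d : ∀ t : ℝ, HasDerivAt h1 (iteratedFDeriv ℝ 2 f (L t) ![v, v] - m * ‖v‖ ^ 2) t := by
    intro t
    have : HasDerivAt h1 (iteratedFDeriv ℝ 2 f (L t) ![v, v] - 0 - m * 1 * ‖v‖ ^ 2) t :=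
      (((hg1d t).sub (hasDerivAt_const t (g1 0))).sub
        (((hasDerivAt_id t).const_mul m).mul_const (‖v‖ ^ 2)))
    simpa using this
  have hh1mono : Monotone h1 := by
    apply monotone_of_deriv_nonneg (fun t => (hh1d t).differentiableAt)
    intro t
    rw [(hh1d t).deriv]
    have := hm (L t) v
    linarith
  have hh1nonneg : ∀ t : ℝ, 0 ≤ t → 0 ≤ h1 t := by
    intro t ht
    have : h1 0 ≤ h1 t := hh1mono ht
    simpa [hh1] using this
  have hhmono : MonotoneOn h (Set.Icc 0 1) := by
    apply monotoneOn_of_deriv_nonneg (convex_Icc 0 1)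
      (fun t _ => (hhd t).continuousAt.continuousWithinAt)
      (fun t ht => ((hhd t).differentiableAt).differentiableWithinAt)
    intro t ht
    rw [(hhd t).deriv]
    rw [interior_Icc] at ht
    exact hh1nonneg t ht.1.le
  have h01 : h 0 ≤ h 1 := hhmono (by norm_num) (by norm_num) (by norm_num)
  have hL0 : L 0 = x := by simp [hL]
  have hL1 : L 1 = y := by simp [hL, hv]
  simp only [hh, hg, hg1, hL0, hL1] at h01
  simp only [one_pow, mul_one, one_mul] at h01
  linarith

theorem stmt_6 {d : ℕ} (F G : EuclideanSpace ℝ (Fin d) → ℝ)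
    (hF : ContDiff ℝ 2 F) (hG : ContDiff ℝ 2 G)
    (hFHess : ∀ x v : EuclideanSpace ℝ (Fin d), 0 ≤ iteratedFDeriv ℝ 2 F x ![v, v])
    (bbar : ℝ) (hb : 0 ≤ bbar)
    (hGHess : ∀ x v : EuclideanSpace ℝ (Fin d),
      -bbar * ‖v‖ ^ 2 ≤ iteratedFDeriv ℝ 2 G x ![v, v])
    (u : ℕ → EuclideanSpace ℝ (Fin d)) (Δt : ℝ) (hΔt : 0 < Δt)
    (hstep : Δt * bbar ≤ 1)
    (hscheme : ∀ n : ℕ,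
      (Δt)⁻¹ • (u (n + 1) - u n) + gradient F (u (n + 1)) + gradient G (u (n + 1)) = 0) :
    ∀ n : ℕ, F (u (n + 1)) + G (u (n + 1)) ≤ F (u n) + G (u n) := by
  intro n
  set x := u (n + 1) with hx
  set y := u n with hy
  set w : EuclideanSpace ℝ (Fin d) := y - x with hw
  have hFineq := taylor_lb F hF 0 (by simpa using hFHess) x y
  have hGineq := taylor_lb G hG (-bbar) (by simpa using hGHess) x y
  have hFgrad : fderiv ℝ F x w = ⟪gradient F x, w⟫ := by
    rw [gradient, InnerProductSpace.toDual_symm_apply]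
  have hGgrad : fderiv ℝ G x w = ⟪gradient G x, w⟫ := by
    rw [gradient, InnerProductSpace.toDual_symm_apply]
  have hsum : gradient F x + gradient G x = -((Δt)⁻¹ • (x - y)) := by
    have hs : (Δt)⁻¹ • (x - y) + gradient F x + gradient G x = 0 := by
      simpa [hx, hy] using hscheme n
    linear_combination (norm := module) hs
  have hinner : fderiv ℝ F x w + fderiv ℝ G x w = (Δt)⁻¹ * ‖w‖ ^ 2 := by
    rw [hFgrad, hGgrad, ← inner_add_left, hsum]
    rw [show (-((Δt)⁻¹ • (x - y)) : EuclideanSpace ℝ (Fin d)) = (Δt)⁻¹ • w by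
      rw [hw]; module]
    rw [real_inner_smul_left, real_inner_self_eq_norm_sq]
  have hcoef : bbar / 2 ≤ (Δt)⁻¹ := by
    have h1 : bbar ≤ (Δt)⁻¹ := by
      nlinarith [mul_le_mul_of_nonneg_left hstep (le_of_lt (inv_pos.mpr hΔt)),
        mul_inv_cancel₀ hΔt.ne']
    linarith
  have hnn : 0 ≤ ((Δt)⁻¹ - bbar / 2) * ‖w‖ ^ 2 :=
    mul_nonneg (by linarith) (by positivity)
  rw [← hw] at hFineq hGineq
  nlinarith [hFineq, hGineq, hinner]
end

section
/- Let F, G : ℝᵈ → ℝ be C². Suppose |vᵀ(∇²G(x))v| ≤ B‖v‖² and vᵀ(∇²F(x))v ≤ C‖v‖_V² for all x, v, where ‖·‖_V is a norm on ℝᵈ and B, C > 0. Suppose (uⁿ) satisfies the forward Euler scheme (uⁿ⁺¹ − uⁿ)/Δt + ∇F(uⁿ) + ∇G(uⁿ) = 0 with Δt > 0. If Δt·((C/2)·sup_{v ≠ 0}(‖v‖_V²/‖v‖²) + B) ≤ 1, then F(uⁿ⁺¹) + G(uⁿ⁺¹) ≤ F(uⁿ) + G(uⁿ). -/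
open scoped RealInnerProductSpace

section aux
variable {E : Type*} [NormedAddCommGroup E] [InnerProductSpace ℝ E] [CompleteSpace E]

lemma line_hasDerivAt (x w : E) (t : ℝ) :
    HasDerivAt (fun s : ℝ => x + s • w) w t := by
  simpa using ((hasDerivAt_id t).smul_const w).const_add x

lemma taylor_upper {f : E → ℝ} (hf : ContDiff ℝ 2 f) (x w : E) (M : ℝ)
    (hM : ∀ y, iteratedFDeriv ℝ 2 f y ![w, w] ≤ M) :
    f (x + w) ≤ f x + fderiv ℝ f x w + M / 2 := by
  have hdf : Differentiable ℝ f := hf.differentiable (by norm_num)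
  have hdf' : Differentiable ℝ (fderiv ℝ f) :=
    (hf.fderiv_right (m := 1) le_rfl).differentiable (by norm_num)
  set g : ℝ → ℝ := fun t => f (x + t • w) with hg
  set g1 : ℝ → ℝ := fun t => fderiv ℝ f (x + t • w) w with hg1
  have hgd : ∀ t, HasDerivAt g (g1 t) t := fun t =>
    (hdf (x + t • w)).hasFDerivAt.comp_hasDerivAt t (line_hasDerivAt x w t)
  have hg1d : ∀ t, HasDerivAt g1 (iteratedFDeriv ℝ 2 f (x + t • w) ![w, w]) t := by
    intro t
    have h1 : HasDerivAt (fun s => fderiv ℝ f (x + s • w))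
        (fderiv ℝ (fderiv ℝ f) (x + t • w) w) t :=
      (hdf' (x + t • w)).hasFDerivAt.comp_hasDerivAt t (line_hasDerivAt x w t)
    have h2 := h1.clm_apply (hasDerivAt_const t w)
    have : iteratedFDeriv ℝ 2 f (x + t • w) ![w, w]
        = fderiv ℝ (fderiv ℝ f) (x + t • w) w w + (fderiv ℝ f (x + t • w)) 0 := by
      simp [iteratedFDeriv_two_apply]
    rw [this]
    exact h2
  have mono1 : Monotone (fun t => g1 0 + M * t - g1 t) := by
    apply monotone_of_hasDerivAt_nonneg
      (f' := fun t => M - iteratedFDeriv ℝ 2 f (x + t • w) ![w, w])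
    · intro t
      have := ((hasDerivAt_const t (g1 0)).add ((hasDerivAt_id t).const_mul M)).sub (hg1d t)
      refine this.congr_deriv ?_
      ring
    · intro t
      simp only [Pi.zero_apply, sub_nonneg]
      exact hM (x + t • w)
  set h : ℝ → ℝ := fun t => g 0 + g1 0 * t + M / 2 * t ^ 2 - g t with hh
  have hhd : ∀ t, HasDerivAt h (g1 0 + M * t - g1 t) t := by
    intro t
    have := (((hasDerivAt_const t (g 0)).add ((hasDerivAt_id t).const_mul (g1 0))).add
      ((hasDerivAt_pow 2 t).const_mul (M / 2))).sub (hgd t)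
    refine this.congr_deriv ?_
    ring
  have monoh : MonotoneOn h (Set.Ici (0:ℝ)) := by
    apply monotoneOn_of_hasDerivWithinAt_nonneg (convex_Ici 0)
      (f' := fun t => g1 0 + M * t - g1 t)
    · exact fun t _ => (hhd t).continuousAt.continuousWithinAt
    · exact fun t _ => (hhd t).hasDerivWithinAt
    · intro t ht
      rw [interior_Ici] at ht
      have := mono1 (le_of_lt ht)
      simpa using this
  have h01 : h 0 ≤ h 1 := monoh (by norm_num) (by norm_num) (by norm_num)
  have hg0 : g 0 = f x := by simp [hg]
  have hg1' : g 1 = f (x + w) := by simp [hg]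
  have hgg : g1 0 = fderiv ℝ f x w := by simp [hg1]
  simp only [hh, hg0, hg1', hgg] at h01
  nlinarith [h01]

end aux

theorem stmt_7 {d : ℕ} (F G : EuclideanSpace ℝ (Fin d) → ℝ)
    (hF : ContDiff ℝ 2 F) (hG : ContDiff ℝ 2 G)
    (nV : EuclideanSpace ℝ (Fin d) → ℝ) (hnV : ∀ v, 0 ≤ nV v)
    (B C : ℝ) (hB : 0 < B) (hC : 0 < C)
    (hGHess : ∀ x v : EuclideanSpace ℝ (Fin d),
      |iteratedFDeriv ℝ 2 G x ![v, v]| ≤ B * ‖v‖ ^ 2)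
    (hFHess : ∀ x v : EuclideanSpace ℝ (Fin d),
      iteratedFDeriv ℝ 2 F x ![v, v] ≤ C * (nV v) ^ 2)
    (u : ℕ → EuclideanSpace ℝ (Fin d)) (Δt : ℝ) (hΔt : 0 < Δt)
    (S : ℝ) (hS : ∀ v : EuclideanSpace ℝ (Fin d), (nV v) ^ 2 ≤ S * ‖v‖ ^ 2)
    (hstep : Δt * ((C / 2) * S + B) ≤ 1)
    (hscheme : ∀ n : ℕ,
      (Δt)⁻¹ • (u (n + 1) - u n) + gradient F (u n) + gradient G (u n) = 0) :
    ∀ n : ℕ, F (u (n + 1)) + G (u (n + 1)) ≤ F (u n) + G (u n) := by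
  intro n
  set w : EuclideanSpace ℝ (Fin d) := u (n + 1) - u n with hw
  have hgrad : gradient F (u n) + gradient G (u n) = -(Δt⁻¹ • w) := by
    have := hscheme n
    rw [← hw] at this
    linear_combination (norm := abel) this
  have hFt := taylor_upper hF (u n) w (C * nV w ^ 2) (fun y => hFHess y w)
  have hGt := taylor_upper hG (u n) w (B * ‖w‖ ^ 2)
    (fun y => (abs_le.mp (hGHess y w)).2)
  have huw : u (n + 1) = u n + w := by rw [hw]; abel
  have hinner : ∀ f : EuclideanSpace ℝ (Fin d) → ℝ,
      fderiv ℝ f (u n) w = ⟪gradient f (u n), w⟫ := by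
    intro f
    rw [gradient, InnerProductSpace.toDual_symm_apply]
  have hsum : fderiv ℝ F (u n) w + fderiv ℝ G (u n) w = -(Δt⁻¹ * ‖w‖ ^ 2) := by
    rw [hinner F, hinner G, ← inner_add_left, hgrad, inner_neg_left,
      real_inner_smul_left, real_inner_self_eq_norm_sq]
  have hnw : (0:ℝ) ≤ ‖w‖ ^ 2 := by positivity
  have hSw := hS w
  have hfac : (C / 2) * S + B ≤ Δt⁻¹ := by
    rw [show Δt⁻¹ = 1 / Δt by ring, le_div_iff₀ hΔt]
    nlinarith [hstep]
  rw [huw]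
  have hCw : C * nV w ^ 2 ≤ C * (S * ‖w‖ ^ 2) := by
    exact mul_le_mul_of_nonneg_left hSw (le_of_lt hC)
  nlinarith [hFt, hGt, hsum, mul_le_mul_of_nonneg_right hfac hnw]
end

section
/- Let V = ℝᵈ with an inner product (·,·) and energy norm ‖v‖_a² = vᵀAv for a symmetric positive semidefinite matrix A. Let V₁, V₂ be subspaces with V = V₁ ⊕ V₂ and γ := sup over nonzero v₁ ∈ V₁, v₂ ∈ V₂ of (v₁, v₂)/(‖v₁‖‖v₂‖) satisfying γ < 1. Suppose sequences u₁ⁿ ∈ V₁, u₂ⁿ ∈ V₂ satisfy the linear partially explicit scheme: ((u₁ⁿ⁺¹ − u₁ⁿ)/Δt + (u₂ⁿ − u₂ⁿ⁻¹)/Δt, v₁) + (A(u₁ⁿ⁺¹ + u₂ⁿ), v₁) = 0 for all v₁ ∈ V₁, and ((u₁ⁿ − u₁ⁿ⁻¹)/Δt + (u₂ⁿ⁺¹ − u₂ⁿ)/Δt, v₂) + (A(u₁ⁿ⁺¹ + u₂ⁿ), v₂) = 0 for all v₂ ∈ V₂. If (Δt/2)·sup_{0 ≠ v₂ ∈ V₂}(‖v₂‖_a²/‖v₂‖²)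 ≤ 1 − γ, then with uⁿ := u₁ⁿ + u₂ⁿ, the quantity (γ/(2Δt))(‖u₁ⁿ⁺¹ − u₁ⁿ‖² + ‖u₂ⁿ⁺¹ − u₂ⁿ‖²) + (1/2)‖uⁿ⁺¹‖_a² is nonincreasing in n. -/
open scoped RealInnerProductSpace

theorem stmt_11 {d : ℕ}
    (A : EuclideanSpace ℝ (Fin d) →ₗ[ℝ] EuclideanSpace ℝ (Fin d))
    (hAsym : ∀ u v, ⟪A u, v⟫ = ⟪u, A v⟫)
    (hApsd : ∀ v, 0 ≤ ⟪A v, v⟫)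
    (V₁ V₂ : Submodule ℝ (EuclideanSpace ℝ (Fin d)))
    (hcompl : IsCompl V₁ V₂)
    (γ : ℝ) (hγ0 : 0 ≤ γ) (hγ1 : γ < 1)
    (hcorr : ∀ v₁ ∈ V₁, ∀ v₂ ∈ V₂, ⟪v₁, v₂⟫ ≤ γ * ‖v₁‖ * ‖v₂‖)
    (Δt : ℝ) (hΔt : 0 < Δt)
    (u₁ u₂ : ℕ → EuclideanSpace ℝ (Fin d))
    (hu₁ : ∀ n, u₁ n ∈ V₁) (hu₂ : ∀ n, u₂ n ∈ V₂)
    (hscheme₁ : ∀ n, 1 ≤ n → ∀ v₁ ∈ V₁,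
      ⟪(Δt)⁻¹ • (u₁ (n + 1) - u₁ n) + (Δt)⁻¹ • (u₂ n - u₂ (n - 1)), v₁⟫
        + ⟪A (u₁ (n + 1) + u₂ n), v₁⟫ = 0)
    (hscheme₂ : ∀ n, 1 ≤ n → ∀ v₂ ∈ V₂,
      ⟪(Δt)⁻¹ • (u₁ n - u₁ (n - 1)) + (Δt)⁻¹ • (u₂ (n + 1) - u₂ n), v₂⟫
        + ⟪A (u₁ (n + 1) + u₂ n), v₂⟫ = 0)
    (hCFL : ∀ v₂ ∈ V₂, v₂ ≠ 0 → (Δt / 2) * ⟪A v₂, v₂⟫ ≤ (1 - γ) * ‖v₂‖ ^ 2) :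
    ∀ n, 1 ≤ n →
      (γ / (2 * Δt)) * (‖u₁ (n + 1) - u₁ n‖ ^ 2 + ‖u₂ (n + 1) - u₂ n‖ ^ 2)
        + (1 / 2) * ⟪A (u₁ (n + 1) + u₂ (n + 1)), u₁ (n + 1) + u₂ (n + 1)⟫
      ≤ (γ / (2 * Δt)) * (‖u₁ n - u₁ (n - 1)‖ ^ 2 + ‖u₂ n - u₂ (n - 1)‖ ^ 2)
        + (1 / 2) * ⟪A (u₁ n + u₂ n), u₁ n + u₂ n⟫ := by
  have hΔt' : Δt ≠ 0 := ne_of_gt hΔt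
  have hs : ∀ x y : EuclideanSpace ℝ (Fin d), ⟪A x, y⟫ = ⟪A y, x⟫ :=
    fun x y => (hAsym x y).trans (real_inner_comm x (A y)).symm
  -- generic final step: divide a multiplied-out inequality by 2Δt
  have final : ∀ X Y SX SY : ℝ, γ * X + Δt * SX ≤ γ * Y + Δt * SY →
      (γ / (2 * Δt)) * X + (1 / 2) * SX ≤ (γ / (2 * Δt)) * Y + (1 / 2) * SY := by
    intro X Y SX SY h
    have h2Δt : (0:ℝ) < 2 * Δt := by linarith
    have h2 : (γ * X + Δt * SX) / (2 * Δt) ≤ (γ * Y + Δt * SY) / (2 * Δt) :=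
      (div_le_div_iff_of_pos_right h2Δt).mpr h
    have eL : (γ * X + Δt * SX) / (2 * Δt) = (γ / (2 * Δt)) * X + (1 / 2) * SX := by
      field_simp
    have eR : (γ * Y + Δt * SY) / (2 * Δt) = (γ / (2 * Δt)) * Y + (1 / 2) * SY := by
      field_simp
    rw [eL, eR] at h2; exact h2
  intro n hn
  set a := u₁ (n + 1) - u₁ n with ha
  set b := u₂ (n + 1) - u₂ n with hb
  set a' := u₁ n - u₁ (n - 1) with ha'
  set b' := u₂ n - u₂ (n - 1) with hb'
  have haV : a ∈ V₁ := V₁.sub_mem (hu₁ _) (hu₁ _)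
  have hbV : b ∈ V₂ := V₂.sub_mem (hu₂ _) (hu₂ _)
  have ha'V : a' ∈ V₁ := V₁.sub_mem (hu₁ _) (hu₁ _)
  have hb'V : b' ∈ V₂ := V₂.sub_mem (hu₂ _) (hu₂ _)
  have e1 := hscheme₁ n hn a haV
  have e2 := hscheme₂ n hn b hbV
  rw [inner_add_left, real_inner_smul_left, real_inner_smul_left, ← ha, ← hb'] at e1
  rw [inner_add_left, real_inner_smul_left, real_inner_smul_left, ← ha', ← hb] at e2
  have f1 : ⟪a, a⟫ + ⟪b', a⟫ + Δt * ⟪A (u₁ (n+1) + u₂ n), a⟫ = 0 := by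
    have h := congrArg (fun t => Δt * t) e1
    simp only [mul_add, ← mul_assoc, mul_inv_cancel₀ hΔt', one_mul, mul_zero] at h
    linarith [h]
  have f2 : ⟪a', b⟫ + ⟪b, b⟫ + Δt * ⟪A (u₁ (n+1) + u₂ n), b⟫ = 0 := by
    have h := congrArg (fun t => Δt * t) e2
    simp only [mul_add, ← mul_assoc, mul_inv_cancel₀ hΔt', one_mul, mul_zero] at h
    linarith [h]
  -- energy identity
  have key : ⟪A (u₁ (n+1) + u₂ n), a⟫ + ⟪A (u₁ (n+1) + u₂ n), b⟫
      = (1/2) * ⟪A (u₁ (n+1) + u₂ (n+1)), u₁ (n+1) + u₂ (n+1)⟫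
        - (1/2) * ⟪A (u₁ n + u₂ n), u₁ n + u₂ n⟫
        + (1/2) * ⟪A a, a⟫ - (1/2) * ⟪A b, b⟫ := by
    rw [ha, hb]
    simp only [map_add, map_sub, inner_add_left, inner_add_right, inner_sub_left,
      inner_sub_right]
    linarith [hs (u₁ n) (u₁ (n+1)), hs (u₁ n) (u₂ n), hs (u₁ n) (u₂ (n+1)),
      hs (u₁ (n+1)) (u₂ n), hs (u₁ (n+1)) (u₂ (n+1)), hs (u₂ n) (u₂ (n+1))]
  -- cross term bounds
  have hcross : ∀ v₁ ∈ V₁, ∀ v₂ ∈ V₂, -(γ/2) * (‖v₁‖^2 + ‖v₂‖^2) ≤ ⟪v₁, v₂⟫ := by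
    intro v₁ h1 v₂ h2
    have h := hcorr (-v₁) (V₁.neg_mem h1) v₂ h2
    rw [inner_neg_left, norm_neg] at h
    nlinarith [sq_nonneg (‖v₁‖ - ‖v₂‖), hγ0]
  have hp : -(γ/2) * (‖a‖^2 + ‖b'‖^2) ≤ ⟪b', a⟫ := by
    rw [real_inner_comm]; exact hcross a haV b' hb'V
  have hq : -(γ/2) * (‖a'‖^2 + ‖b‖^2) ≤ ⟪a', b⟫ := hcross a' ha'V b hbV
  have hqb : (Δt / 2) * ⟪A b, b⟫ ≤ (1 - γ) * ‖b‖ ^ 2 := by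
    by_cases hb0 : b = 0
    · simp [hb0]
    · exact hCFL b hbV hb0
  have hqa : 0 ≤ ⟪A a, a⟫ := hApsd a
  have hna : ⟪a, a⟫ = ‖a‖^2 := real_inner_self_eq_norm_sq a
  have hnb : ⟪b, b⟫ = ‖b‖^2 := real_inner_self_eq_norm_sq b
  have hna0 : (0:ℝ) ≤ ‖a‖^2 := sq_nonneg _
  have key2 : γ * (‖a‖^2 + ‖b‖^2)
        + Δt * ⟪A (u₁ (n+1) + u₂ (n+1)), u₁ (n+1) + u₂ (n+1)⟫
      ≤ γ * (‖a'‖^2 + ‖b'‖^2) + Δt * ⟪A (u₁ n + u₂ n), u₁ n + u₂ n⟫ := by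
    have keyΔ : Δt * ⟪A (u₁ (n+1) + u₂ n), a⟫ + Δt * ⟪A (u₁ (n+1) + u₂ n), b⟫
        = (1/2) * (Δt * ⟪A (u₁ (n+1) + u₂ (n+1)), u₁ (n+1) + u₂ (n+1)⟫)
          - (1/2) * (Δt * ⟪A (u₁ n + u₂ n), u₁ n + u₂ n⟫)
          + (1/2) * (Δt * ⟪A a, a⟫) - (1/2) * (Δt * ⟪A b, b⟫) := by
      linear_combination Δt * key
    have T1 : 0 ≤ Δt * ⟪A a, a⟫ := mul_nonneg hΔt.le hqa
    have T2 : 0 ≤ (1 - γ) * ‖a‖^2 := mul_nonneg (by linarith) hna0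
    linarith [f1, f2, keyΔ, hp, hq, hqb, T1, T2, hna, hnb]
  exact final _ _ _ _ key2
end

section
/- Let V be a real inner product space, F : V → ℝ with gradient f, and suppose δ²F(u)(v,v) ≥ c‖v‖_V² and δ²F exists along segments with Taylor remainder form. Let G : V → ℝ with gradient g and |δ²G(u)(v,v)| ≤ B‖v‖². Assume the partially explicit scheme identities hold for sequences u₁ⁿ ∈ V₁, u₂ⁿ ∈ V₂ (V = V₁ ⊕ V₂, correlation constant γ < 1), and assume the splitting-error bound (f(uⁿ⁺¹) − f(u₁ⁿ⁺¹ + u₂ⁿ), uⁿ⁺¹ − uⁿ) ≤ (c/2)‖uⁿ⁺¹ − uⁿ‖_V² + ((1 − γ)/Δt − (1 + γ)B/2)(‖u₁ⁿ⁺¹ − u₁ⁿ‖² + ‖u₂ⁿ⁺¹ − u₂ⁿ‖²). Then (γ/(2Δt))Σᵢ‖uᵢⁿ⁺¹ − uᵢⁿ‖² + F(uⁿ⁺¹) + G(uⁿ⁺¹) ≤ (γ/(2Δt))Σᵢ‖uᵢⁿ − uᵢⁿ⁻¹‖² + F(uⁿ) + G(uⁿ). -/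
open scoped RealInnerProductSpace

lemma stmt_17_aux {γ x y p : ℝ} (hγ : 0 ≤ γ) (h : |p| ≤ γ * x * y) :
    -(2 * p) ≤ γ * (x ^ 2 + y ^ 2) ∧ 2 * p ≤ γ * (x ^ 2 + y ^ 2) := by
  constructor <;>
  nlinarith [neg_abs_le p, le_abs_self p, mul_nonneg hγ (sq_nonneg (x - y))]

theorem stmt_17 {V : Type*} [NormedAddCommGroup V] [InnerProductSpace ℝ V]
    (V₁ V₂ : Submodule ℝ V) (hcompl : IsCompl V₁ V₂)
    (γ : ℝ) (hγ0 : 0 ≤ γ) (hγ1 : γ < 1)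
    (hcorr : ∀ v₁ ∈ V₁, ∀ v₂ ∈ V₂, |⟪v₁, v₂⟫| ≤ γ * ‖v₁‖ * ‖v₂‖)
    (nV : V → ℝ) (hnV : ∀ v, 0 ≤ nV v)
    (F G : V → ℝ) (f g : V → V)
    (c B : ℝ) (hc : 0 ≤ c) (hB : 0 ≤ B)
    -- Taylor lower bound for F: F(b) = F(a) - (f(a), a - b) + ½δ²F(ξ), δ²F ≥ c‖·‖_V²
    (hFTaylor : ∀ a b : V, F a - ⟪f a, a - b⟫ + (c / 2) * (nV (a - b)) ^ 2 ≤ F b)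
    -- Taylor bound for G: |G(b) - G(a) - (g(a), b - a)| ≤ (B/2)‖b - a‖²
    (hGTaylor : ∀ a b : V, |G b - G a - ⟪g a, b - a⟫| ≤ (B / 2) * ‖b - a‖ ^ 2)
    (Δt : ℝ) (hΔt : 0 < Δt)
    (u₁ u₂ : ℕ → V) (hu₁ : ∀ n, u₁ n ∈ V₁) (hu₂ : ∀ n, u₂ n ∈ V₂)
    (hscheme₁ : ∀ n, 1 ≤ n → ∀ v₁ ∈ V₁,
      ⟪(Δt)⁻¹ • (u₁ (n + 1) - u₁ n) + (Δt)⁻¹ • (u₂ n - u₂ (n - 1)), v₁⟫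
        + ⟪f (u₁ (n + 1) + u₂ n) + g (u₁ n + u₂ n), v₁⟫ = 0)
    (hscheme₂ : ∀ n, 1 ≤ n → ∀ v₂ ∈ V₂,
      ⟪(Δt)⁻¹ • (u₁ n - u₁ (n - 1)) + (Δt)⁻¹ • (u₂ (n + 1) - u₂ n), v₂⟫
        + ⟪f (u₁ (n + 1) + u₂ n) + g (u₁ n + u₂ n), v₂⟫ = 0)
    (hsplit : ∀ n, 1 ≤ n →
      ⟪f (u₁ (n + 1) + u₂ (n + 1)) - f (u₁ (n + 1) + u₂ n),
          (u₁ (n + 1) + u₂ (n + 1)) - (u₁ n + u₂ n)⟫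
        ≤ (c / 2) * (nV ((u₁ (n + 1) + u₂ (n + 1)) - (u₁ n + u₂ n))) ^ 2
          + ((1 - γ) / Δt - (1 + γ) * B / 2)
            * (‖u₁ (n + 1) - u₁ n‖ ^ 2 + ‖u₂ (n + 1) - u₂ n‖ ^ 2)) :
    ∀ n, 1 ≤ n →
      (γ / (2 * Δt)) * (‖u₁ (n + 1) - u₁ n‖ ^ 2 + ‖u₂ (n + 1) - u₂ n‖ ^ 2)
          + F (u₁ (n + 1) + u₂ (n + 1)) + G (u₁ (n + 1) + u₂ (n + 1))
        ≤ (γ / (2 * Δt)) * (‖u₁ n - u₁ (n - 1)‖ ^ 2 + ‖u₂ n - u₂ (n - 1)‖ ^ 2)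
          + F (u₁ n + u₂ n) + G (u₁ n + u₂ n) := by
  intro n hn
  have ha₁ : u₁ (n + 1) - u₁ n ∈ V₁ := V₁.sub_mem (hu₁ _) (hu₁ _)
  have ha₂ : u₂ (n + 1) - u₂ n ∈ V₂ := V₂.sub_mem (hu₂ _) (hu₂ _)
  have hb₁ : u₁ n - u₁ (n - 1) ∈ V₁ := V₁.sub_mem (hu₁ _) (hu₁ _)
  have hb₂ : u₂ n - u₂ (n - 1) ∈ V₂ := V₂.sub_mem (hu₂ _) (hu₂ _)
  have h1 := hscheme₁ n hn _ ha₁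
  have h2 := hscheme₂ n hn _ ha₂
  have hsp := hsplit n hn
  have hF := hFTaylor (u₁ (n + 1) + u₂ (n + 1)) (u₁ n + u₂ n)
  have hG := (abs_le.mp (hGTaylor (u₁ n + u₂ n) (u₁ (n + 1) + u₂ (n + 1)))).2
  have hw : (u₁ (n + 1) + u₂ (n + 1)) - (u₁ n + u₂ n)
      = (u₁ (n + 1) - u₁ n) + (u₂ (n + 1) - u₂ n) := by abel
  rw [hw] at hsp hF hG
  simp only [inner_add_left, inner_add_right, real_inner_smul_left,
    real_inner_self_eq_norm_sq] at h1 h2 hF hG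
  simp only [inner_sub_left, inner_add_right] at hsp
  have hcomm1 : ⟪u₂ n - u₂ (n - 1), u₁ (n + 1) - u₁ n⟫
      = ⟪u₁ (n + 1) - u₁ n, u₂ n - u₂ (n - 1)⟫ := real_inner_comm _ _
  rw [hcomm1] at h1
  have hcQ := hcorr _ ha₁ _ hb₂
  have hcR := hcorr _ hb₁ _ ha₂
  have hcP := hcorr _ ha₁ _ ha₂
  have hnorm : ‖(u₁ (n + 1) - u₁ n) + (u₂ (n + 1) - u₂ n)‖ ^ 2
      = ‖u₁ (n + 1) - u₁ n‖ ^ 2 + 2 * ⟪u₁ (n + 1) - u₁ n, u₂ (n + 1) - u₂ n⟫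
        + ‖u₂ (n + 1) - u₂ n‖ ^ 2 := norm_add_sq_real _ _
  rw [hnorm] at hG
  -- correlation estimates, converted to sum form
  have hQ : -(2 * ⟪u₁ (n + 1) - u₁ n, u₂ n - u₂ (n - 1)⟫)
      ≤ γ * (‖u₁ (n + 1) - u₁ n‖ ^ 2 + ‖u₂ n - u₂ (n - 1)‖ ^ 2) :=
    (stmt_17_aux hγ0 hcQ).1
  have hR : -(2 * ⟪u₁ n - u₁ (n - 1), u₂ (n + 1) - u₂ n⟫)
      ≤ γ * (‖u₁ n - u₁ (n - 1)‖ ^ 2 + ‖u₂ (n + 1) - u₂ n‖ ^ 2) :=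
    (stmt_17_aux hγ0 hcR).1
  have hP : 2 * ⟪u₁ (n + 1) - u₁ n, u₂ (n + 1) - u₂ n⟫
      ≤ γ * (‖u₁ (n + 1) - u₁ n‖ ^ 2 + ‖u₂ (n + 1) - u₂ n‖ ^ 2) :=
    (stmt_17_aux hγ0 hcP).2
  have hinv : (0:ℝ) ≤ Δt⁻¹ := by positivity
  have m1 : Δt⁻¹ * (-(2 * ⟪u₁ (n + 1) - u₁ n, u₂ n - u₂ (n - 1)⟫)
        - 2 * ⟪u₁ n - u₁ (n - 1), u₂ (n + 1) - u₂ n⟫)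
      ≤ Δt⁻¹ * (γ * (‖u₁ (n + 1) - u₁ n‖ ^ 2 + ‖u₂ n - u₂ (n - 1)‖ ^ 2)
        + γ * (‖u₁ n - u₁ (n - 1)‖ ^ 2 + ‖u₂ (n + 1) - u₂ n‖ ^ 2)) :=
    mul_le_mul_of_nonneg_left (by linarith) hinv
  have m2 : 0 ≤ (B / 2) * (γ * (‖u₁ (n + 1) - u₁ n‖ ^ 2 + ‖u₂ (n + 1) - u₂ n‖ ^ 2)
        - 2 * ⟪u₁ (n + 1) - u₁ n, u₂ (n + 1) - u₂ n⟫) :=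
    mul_nonneg (by linarith) (by linarith)
  have e1 : γ / (2 * Δt) = γ / 2 * Δt⁻¹ := by field_simp
  have e2 : ((1 - γ) / Δt - (1 + γ) * B / 2) = ((1 - γ) * Δt⁻¹ - (1 + γ) * B / 2) := by
    rw [div_eq_mul_inv]
  rw [e1]
  rw [e2] at hsp
  linarith [h1, h2, hsp, hF, hG, m1, m2]
end
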